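/- Let R be a random variable on the positive integers with P(R=1) = p_{01}^{10} and P(R=r) = p_{01}^{11}·(p_{11}^{11})^{r-2}·p_{11}^{10} for r ≥ 2, where p_{01}^{10}+p_{01}^{11}=1, p_{11}^{10}+p_{11}^{11}=1, and 0 < p_{11}^{11} < 1. Then the variance of R equals (p_{01}^{11}/(p_{11}^{10})²)·(p_{01}^{10} + p_{11}^{11}). -/

import Mathlib

/-- Variance of run length for the m=2 de Bruijn run-length distribution:
Var[R] = (b/s²)·(q + d). -/
theorem deBruijn_m2_variance_runLength
    (q b s d : ℝ) (hqb : q + b = 1) (hsd : s + d = 1)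
    (hd0 : 0 < d) (hd1 : d < 1)
    (P : ℕ → ℝ)
    (hP : P = fun r => if r = 1 then q else if 2 ≤ r then b * d ^ (r - 2) * s else 0) :
    (∑' r : ℕ, (r : ℝ) ^ 2 * P r) - (∑' r : ℕ, (r : ℝ) * P r) ^ 2
      = b / s ^ 2 * (q + d) := by
  subst hP
  have hd : ‖d‖ < 1 := by
    rw [Real.norm_eq_abs, abs_of_pos hd0]; exact hd1
  have hone : (1 : ℝ) - d ≠ 0 := by nlinarith
  have hC0 : HasSum (fun n : ℕ => d ^ n) (1 - d)⁻¹ :=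
    hasSum_geometric_of_norm_lt_one hd
  have hC1 : HasSum (fun n : ℕ => ((n + 1).choose 1 : ℝ) * d ^ n) (1 / (1 - d) ^ 2) :=
    hasSum_choose_mul_geometric_of_norm_lt_one 1 hd
  have hC2 : HasSum (fun n : ℕ => ((n + 2).choose 2 : ℝ) * d ^ n) (1 / (1 - d) ^ 3) :=
    hasSum_choose_mul_geometric_of_norm_lt_one 2 hd
  -- first moment, shifted
  have h1 : HasSum (fun n : ℕ => ((n : ℝ) + 2) * d ^ n)
      (1 / (1 - d) ^ 2 + (1 - d)⁻¹) := by
    have := hC1.add hC0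
    convert this using 2 with n
    simp [Nat.choose_one_right]
    ring
  have h2 : HasSum (fun n : ℕ => ((n : ℝ) + 2) ^ 2 * d ^ n)
      (2 * (1 / (1 - d) ^ 3) + 1 / (1 - d) ^ 2 + (1 - d)⁻¹) := by
    have := (hC2.mul_left 2).add hC1 |>.add hC0
    convert this using 2 with n
    case e'_3 => rfl
    have c2 : ((n + 2).choose 2 : ℝ) = (n + 2) * (n + 1) / 2 := by
      rw [Nat.choose_two_right]
      push_cast [Nat.succ_sub_one]
      rw [Nat.cast_div]
      · push_cast; ring
      · simpa [Nat.mul_comm] using Nat.even_mul_succ_self (n + 1) |>.two_dvd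
      · norm_num
    rw [c2]
    simp [Nat.choose_one_right]
    ring
  set P : ℕ → ℝ := fun r => if r = 1 then q else if 2 ≤ r then b * d ^ (r - 2) * s else 0
    with hPdef
  -- key facts about P at shifted indices
  have hPshift : ∀ n : ℕ, P (n + 2) = b * d ^ n * s := by
    intro n
    simp [hPdef]
  have hP0 : P 0 = 0 := by simp [hPdef]
  have hP1 : P 1 = q := by simp [hPdef]
  -- first moment total
  have hE1 : HasSum (fun r : ℕ => (r : ℝ) * P r)
      (b * s * (1 / (1 - d) ^ 2 + (1 - d)⁻¹) + q) := by
    have hsh : HasSum (fun n : ℕ => ((n + 2 : ℕ) : ℝ) * P (n + 2))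
        (b * s * (1 / (1 - d) ^ 2 + (1 - d)⁻¹)) := by
      have := h1.mul_left (b * s)
      convert this using 2 with n
      case e'_3 => rfl
      rw [hPshift n]
      push_cast
      ring
    have := (hasSum_nat_add_iff (f := fun r : ℕ => (r : ℝ) * P r) 2).mp hsh
    simpa [Finset.sum_range_succ, hP0, hP1] using this
  have hE2 : HasSum (fun r : ℕ => (r : ℝ) ^ 2 * P r)
      (b * s * (2 * (1 / (1 - d) ^ 3) + 1 / (1 - d) ^ 2 + (1 - d)⁻¹) + q) := by
    have hsh : HasSum (fun n : ℕ => ((n + 2 : ℕ) : ℝ) ^ 2 * P (n + 2))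
        (b * s * (2 * (1 / (1 - d) ^ 3) + 1 / (1 - d) ^ 2 + (1 - d)⁻¹)) := by
      have := h2.mul_left (b * s)
      convert this using 2 with n
      case e'_3 => rfl
      rw [hPshift n]
      push_cast
      ring
    have := (hasSum_nat_add_iff (f := fun r : ℕ => (r : ℝ) ^ 2 * P r) 2).mp hsh
    simpa [Finset.sum_range_succ, hP0, hP1] using this
  rw [hE1.tsum_eq, hE2.tsum_eq]
  have hq : q = 1 - b := by linarith
  have hs : s = 1 - d := by linarith
  subst hq hs
  field_simp
  ring
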